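/- Let Kₙ = K₀(t₁,…,tₙ) be a primitive tower, M a monomial in t₁,…,tₙ with indicator m, and a ∈ K_{m−1}. If a ∈ K_{m−1}′ (a is a derivative of an element of K_{m−1}), then a·M ∈ Kₙ′ + Kₙ^{(≺M)}, i.e., a·M is congruent modulo derivatives in Kₙ to an element whose head monomial is strictly lower than M. -/

import Mathlib

/-- `g` is `u`-proper over the subfield `L`: `g = p(u)/q(u)` with `deg p < deg q`. -/
def IsProperAt {F : Type*} [Field F] (L : Subfield F) (u : F) (g : F) : Prop :=
  ∃ p q : Polynomial ↥L, q ≠ 0 ∧ p.degree < q.degree ∧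
    g = Polynomial.aeval u p / Polynomial.aeval u q

/-- `g` is a linear combination of monomials in `t₁,…,tₙ` whose exponent vectors
satisfy `allowed` and whose coefficients satisfy `coeffOK`. -/
def MatryPart {F : Type*} [Field F] {n : ℕ} (t : Fin n → F)
    (allowed : (Fin n → ℕ) → Prop) (coeffOK : F → Prop) (g : F) : Prop :=
  ∃ (S : Finset (Fin n → ℕ)) (c : (Fin n → ℕ) → F),
    (∀ e ∈ S, allowed e) ∧ (∀ e ∈ S, coeffOK (c e)) ∧
    g = ∑ e ∈ S, c e * ∏ j, t j ^ e j

/-- Pure lexicographic order on monomials in `t₁,…,tₙ` with `t₁ ≺ ⋯ ≺ tₙ`. -/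
def MonLt {n : ℕ} (d e : Fin n → ℕ) : Prop :=
  ∃ j : Fin n, d j < e j ∧ ∀ k, j < k → d k = e k

/-- `f ∈ Kₙ^{(≺E)}`: `f` has a matryoshka decomposition all of whose monomials
are `≺ E`. -/
def BelowMon {F : Type*} [Field F] {n : ℕ} (t : Fin n → F)
    (K : Fin (n + 1) → Subfield F) (E : Fin n → ℕ) (f : F) : Prop :=
  ∃ (g0 : F) (g : Fin n → F),
    MatryPart t (fun e => MonLt e E) (· ∈ K 0) g0 ∧
    (∀ i : Fin n, MatryPart t (fun e => (∀ j, e j ≠ 0 → i < j) ∧ MonLt e E)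
      (IsProperAt (K i.castSucc) (t i)) (g i)) ∧
    f = g0 + ∑ i, g i

/-! ### Auxiliary lemmas -/

section ProperLemmas
variable {F : Type*} [Field F] (L : Subfield F) (u : F)

lemma isProperAt_zero : IsProperAt L u 0 :=
  ⟨0, Polynomial.X, Polynomial.X_ne_zero,
    by rw [Polynomial.degree_zero, Polynomial.degree_X]; exact_mod_cast WithBot.bot_lt_coe 1,
    by simp⟩

lemma aeval_ne_zero_of_tr (htr : Transcendental ↥L u) {q : Polynomial ↥L} (hq : q ≠ 0) :
    Polynomial.aeval u q ≠ 0 := fun h => hq ((transcendental_iff.1 htr) q h)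

lemma isProperAt_add (htr : Transcendental ↥L u) {f g : F}
    (hf : IsProperAt L u f) (hg : IsProperAt L u g) : IsProperAt L u (f + g) := by
  obtain ⟨p, q, hq, hd, rfl⟩ := hf
  obtain ⟨p', q', hq', hd', rfl⟩ := hg
  refine ⟨p * q' + p' * q, q * q', mul_ne_zero hq hq', ?_, ?_⟩
  · refine lt_of_le_of_lt (Polynomial.degree_add_le _ _) (max_lt ?_ ?_)
    · rw [Polynomial.degree_mul, Polynomial.degree_mul]
      exact (WithBot.add_lt_add_iff_right (Polynomial.degree_ne_bot.2 hq')).2 hd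
    · rw [Polynomial.degree_mul, Polynomial.degree_mul, add_comm q.degree]
      exact (WithBot.add_lt_add_iff_right (Polynomial.degree_ne_bot.2 hq)).2 hd'
  · have h1 := aeval_ne_zero_of_tr L u htr hq
    have h2 := aeval_ne_zero_of_tr L u htr hq'
    simp only [map_add, map_mul]
    field_simp

lemma isProperAt_mul_mem {z : F} (hz : z ∈ L) {g : F} (hg : IsProperAt L u g) :
    IsProperAt L u (z * g) := by
  obtain ⟨p, q, hq, hd, rfl⟩ := hg
  refine ⟨Polynomial.C ⟨z, hz⟩ * p, q, hq, ?_, ?_⟩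
  · refine lt_of_le_of_lt (le_trans (Polynomial.degree_mul_le _ _) ?_) hd
    simpa using add_le_add (Polynomial.degree_C_le (a := (⟨z, hz⟩ : ↥L))) (le_refl p.degree)
  · simp only [map_mul, Polynomial.aeval_C, mul_div_assoc]
    rfl

end ProperLemmas

section MatryLemmas
variable {F : Type*} [Field F] {n : ℕ} (t : Fin n → F)
  {allowed : (Fin n → ℕ) → Prop} {coeffOK : F → Prop}

lemma matryPart_zero : MatryPart t allowed coeffOK 0 :=
  ⟨∅, fun _ => 0, by simp, by simp, by simp⟩

lemma matryPart_single {c : F} {e : Fin n → ℕ} (ha : allowed e) (hc : coeffOK c) :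
    MatryPart t allowed coeffOK (c * ∏ j, t j ^ e j) :=
  ⟨{e}, fun _ => c, by simpa using ha, by simpa using hc, by simp⟩

lemma matryPart_add (hadd : ∀ x y, coeffOK x → coeffOK y → coeffOK (x + y))
    {f g : F} (hf : MatryPart t allowed coeffOK f) (hg : MatryPart t allowed coeffOK g) :
    MatryPart t allowed coeffOK (f + g) := by
  obtain ⟨S₁, c₁, ha₁, hc₁, rfl⟩ := hf
  obtain ⟨S₂, c₂, ha₂, hc₂, rfl⟩ := hg
  classical
  refine ⟨S₁ ∪ S₂, fun e => (if e ∈ S₁ then c₁ e else 0) + (if e ∈ S₂ then c₂ e else 0),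
    ?_, ?_, ?_⟩
  · intro e he
    rcases Finset.mem_union.1 he with h | h
    · exact ha₁ e h
    · exact ha₂ e h
  · intro e he
    by_cases h1 : e ∈ S₁ <;> by_cases h2 : e ∈ S₂ <;>
      simp only [h1, h2, if_true, if_false, add_zero, zero_add]
    · exact hadd _ _ (hc₁ e h1) (hc₂ e h2)
    · exact hc₁ e h1
    · exact hc₂ e h2
    · exact absurd he (by simp [h1, h2])
  · simp only [add_mul]
    rw [Finset.sum_add_distrib]
    congr 1
    · rw [← Finset.sum_subset Finset.subset_union_left
        (fun e _ he => by simp [he])]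
      exact Finset.sum_congr rfl fun e he => by simp [he]
    · rw [← Finset.sum_subset Finset.subset_union_right
        (fun e _ he => by simp [he])]
      exact Finset.sum_congr rfl fun e he => by simp [he]

end MatryLemmas

section BelowMonLemmas
variable {F : Type*} [Field F] {n : ℕ} {t : Fin n → F} {K : Fin (n + 1) → Subfield F}
  {E : Fin n → ℕ}

lemma belowMon_zero : BelowMon t K E 0 :=
  ⟨0, 0, matryPart_zero t, fun _ => matryPart_zero t, by simp⟩

lemma belowMon_add (htr : ∀ i : Fin n, Transcendental ↥(K i.castSucc) (t i))
    {f g : F} (hf : BelowMon t K E f) (hg : BelowMon t K E g) : BelowMon t K E (f + g) := by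
  obtain ⟨f0, fv, hf0, hfv, rfl⟩ := hf
  obtain ⟨g0, gv, hg0, hgv, rfl⟩ := hg
  refine ⟨f0 + g0, fv + gv, matryPart_add t (fun _ _ hx hy => Subfield.add_mem _ hx hy) hf0 hg0,
    fun i => matryPart_add t (fun _ _ hx hy => isProperAt_add _ _ (htr i) hx hy) (hfv i) (hgv i),
    ?_⟩
  simp only [Pi.add_apply, Finset.sum_add_distrib]
  ring

lemma belowMon_term_K0 {c : F} {e : Fin n → ℕ} (hm : MonLt e E) (hc : c ∈ K 0) :
    BelowMon t K E (c * ∏ j, t j ^ e j) :=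
  ⟨c * ∏ j, t j ^ e j, 0, matryPart_single t hm hc, fun _ => matryPart_zero t, by simp⟩

lemma belowMon_term_proper {c : F} {e : Fin n → ℕ} {p : Fin n} (hm : MonLt e E)
    (hc : IsProperAt (K p.castSucc) (t p) c) (hsupp : ∀ k, e k ≠ 0 → p < k) :
    BelowMon t K E (c * ∏ j, t j ^ e j) := by
  classical
  refine ⟨0, fun i => if i = p then c * ∏ j, t j ^ e j else 0, matryPart_zero t, ?_, ?_⟩
  · intro i
    by_cases h : i = p
    · subst h
      simp only [if_true]
      exact matryPart_single t ⟨hsupp, hm⟩ hc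
    · simp only [h, if_false]
      exact matryPart_zero t
  · rw [Finset.sum_ite_eq' Finset.univ p]
    simp

lemma belowMon_listSum (htr : ∀ i : Fin n, Transcendental ↥(K i.castSucc) (t i))
    {l : List F} (h : ∀ x ∈ l, BelowMon t K E x) : BelowMon t K E l.sum := by
  induction l with
  | nil => exact belowMon_zero
  | cons a l ih =>
    rw [List.sum_cons]
    exact belowMon_add htr (h a (by simp)) (ih fun x hx => h x (by simp [hx]))

lemma belowMon_finsetSum (htr : ∀ i : Fin n, Transcendental ↥(K i.castSucc) (t i))
    {ι : Type*} {s : Finset ι} {f : ι → F} (h : ∀ i ∈ s, BelowMon t K E (f i)) :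
    BelowMon t K E (∑ i ∈ s, f i) :=
  Finset.sum_induction f _ (fun _ _ => belowMon_add htr) belowMon_zero h

end BelowMonLemmas

section DeltaLemmas
variable {F : Type*} [Field F] (δ : F → F)
  (hδmul : ∀ a b : F, δ (a * b) = δ a * b + a * δ b)

include hδmul in
lemma delta_one : δ 1 = 0 := by
  have := hδmul 1 1
  simp only [mul_one, one_mul] at this
  have h2 : δ 1 + 0 = δ 1 + δ 1 := by rw [add_zero]; exact this
  exact (add_left_cancel h2).symm

include hδmul in
lemma delta_pow (x : F) (e : ℕ) : δ (x ^ e) = e * x ^ (e - 1) * δ x := by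
  induction e with
  | zero => simp [delta_one δ hδmul]
  | succ k ih =>
    rw [pow_succ, hδmul, ih]
    cases k with
    | zero => simp
    | succ k' =>
      push_cast
      calc (↑k' + 1) * x ^ k' * δ x * x + x ^ (k' + 1) * δ x
          = ((↑k' + 1) * (x ^ k' * x) + x ^ (k' + 1)) * δ x := by ring
        _ = (↑k' + 1 + 1) * x ^ (k' + 1) * δ x := by rw [← pow_succ]; ring

include hδmul in
lemma delta_prod {ι : Type*} [DecidableEq ι] (s : Finset ι) (f : ι → F) :
    δ (∏ i ∈ s, f i) = ∑ i ∈ s, δ (f i) * ∏ k ∈ s.erase i, f k := by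
  induction s using Finset.induction with
  | empty => simp [delta_one δ hδmul]
  | insert a s ha ih =>
    rw [Finset.prod_insert ha, hδmul, ih, Finset.sum_insert ha, Finset.erase_insert ha,
      Finset.mul_sum]
    congr 1
    refine Finset.sum_congr rfl fun i hi => ?_
    rw [Finset.erase_insert_of_ne (by rintro rfl; exact ha hi),
      Finset.prod_insert (fun h => ha (Finset.mem_of_mem_erase h))]
    ring

end DeltaLemmas

section TowerLemmas
variable {F : Type*} [Field F] {n : ℕ} {t : Fin n → F} {K : Fin (n + 1) → Subfield F}

lemma K_step (hadj : ∀ i : Fin n, K i.succ = Subfield.closure ((K i.castSucc : Set F) ∪ {t i}))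
    (i : Fin n) : K i.castSucc ≤ K i.succ := by
  rw [hadj i]
  intro x hx
  exact Subfield.subset_closure (Set.mem_union_left _ hx)

lemma t_mem_succ (hadj : ∀ i : Fin n, K i.succ = Subfield.closure ((K i.castSucc : Set F) ∪ {t i}))
    (i : Fin n) : t i ∈ K i.succ := by
  rw [hadj i]
  exact Subfield.subset_closure (Set.mem_union_right _ rfl)

lemma K_mono (hadj : ∀ i : Fin n, K i.succ = Subfield.closure ((K i.castSucc : Set F) ∪ {t i}))
    {a b : ℕ} (hab : a ≤ b) (hb : b ≤ n) :
    K ⟨a, by omega⟩ ≤ K ⟨b, by omega⟩ := by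
  induction b with
  | zero => exact le_of_eq (by congr; omega)
  | succ b ih =>
    rcases Nat.lt_or_ge a (b+1) with h | h
    · have h1 : K ⟨a, by omega⟩ ≤ K ⟨b, by omega⟩ := ih (by omega) (by omega)
      have h2 := K_step hadj ⟨b, by omega⟩
      have e1 : (⟨b, by omega⟩ : Fin n).castSucc = ⟨b, by omega⟩ := rfl
      have e2 : (⟨b, by omega⟩ : Fin n).succ = ⟨b+1, by omega⟩ := rfl
      rw [e1, e2] at h2
      exact le_trans h1 h2
    · exact le_of_eq (by congr; omega)

lemma t_mem_K (hadj : ∀ i : Fin n, K i.succ = Subfield.closure ((K i.castSucc : Set F) ∪ {t i}))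
    (k : Fin n) {j : ℕ} (hkj : (k : ℕ) < j) (hj : j ≤ n) : t k ∈ K ⟨j, by omega⟩ := by
  have h1 : t k ∈ K ⟨(k : ℕ) + 1, by omega⟩ := t_mem_succ hadj k
  exact K_mono hadj (by omega) hj h1

/-- Representation of elements of `K i.succ` as rational functions in `t i`. -/
lemma mem_succ_repr (hadj : ∀ i : Fin n, K i.succ = Subfield.closure ((K i.castSucc : Set F) ∪ {t i}))
    (i : Fin n) {f : F} (hf : f ∈ K i.succ) :
    ∃ p q : Polynomial ↥(K i.castSucc), q ≠ 0 ∧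
      f = Polynomial.aeval (t i) p / Polynomial.aeval (t i) q := by
  set L := K i.castSucc
  have hmem : f ∈ IntermediateField.adjoin ↥L ({t i} : Set F) := by
    have hle : Subfield.closure ((L : Set F) ∪ {t i}) ≤
        (IntermediateField.adjoin ↥L ({t i} : Set F)).toSubfield := by
      apply Subfield.closure_le.2
      rintro x (hx | hx)
      · simp only [SetLike.mem_coe, IntermediateField.mem_toSubfield]
        exact (IntermediateField.adjoin ↥L ({t i} : Set F)).algebraMap_mem ⟨x, hx⟩
      · rw [hx]; simp only [SetLike.mem_coe, IntermediateField.mem_toSubfield]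
        exact IntermediateField.subset_adjoin _ _ rfl
    exact hle (by rw [← hadj i]; exact hf)
  obtain ⟨p, q, hpq⟩ := (IntermediateField.mem_adjoin_simple_iff ↥L f).1 hmem
  by_cases hq : q = 0
  · refine ⟨0, Polynomial.X, Polynomial.X_ne_zero, ?_⟩
    rw [hpq, hq]
    simp
  · exact ⟨p, q, hq, hpq⟩

end TowerLemmas

section SumPredLemmas
variable {F : Type*} [Field F]

def SumPred (P : F → Prop) (x : F) : Prop :=
  ∃ l : List F, (∀ y ∈ l, P y) ∧ x = l.sum

variable {P Q : F → Prop}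

lemma sumPred_of {x : F} (h : P x) : SumPred P x := ⟨[x], by simpa using h, by simp⟩

lemma sumPred_add {x y : F} (hx : SumPred P x) (hy : SumPred P y) : SumPred P (x + y) := by
  obtain ⟨l₁, h₁, rfl⟩ := hx
  obtain ⟨l₂, h₂, rfl⟩ := hy
  refine ⟨l₁ ++ l₂, ?_, by simp⟩
  intro z hz
  rcases List.mem_append.1 hz with h | h
  · exact h₁ z h
  · exact h₂ z h

lemma sumPred_zero : SumPred P 0 := ⟨[], by simp, by simp⟩

lemma sumPred_finsetSum {ι : Type*} {s : Finset ι} {f : ι → F}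
    (h : ∀ i ∈ s, SumPred P (f i)) : SumPred P (∑ i ∈ s, f i) :=
  Finset.sum_induction f _ (fun _ _ => sumPred_add) sumPred_zero h

lemma sumPred_mono (hPQ : ∀ x, P x → Q x) {x : F} (h : SumPred P x) : SumPred Q x := by
  obtain ⟨l, hl, rfl⟩ := h
  exact ⟨l, fun y hy => hPQ y (hl y hy), rfl⟩

end SumPredLemmas

section Decomp
variable {F : Type*} [Field F] {n : ℕ} {t : Fin n → F} {K : Fin (n + 1) → Subfield F}

lemma decomp (hadj : ∀ i : Fin n, K i.succ = Subfield.closure ((K i.castSucc : Set F) ∪ {t i}))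
    (htr : ∀ i : Fin n, Transcendental ↥(K i.castSucc) (t i)) (i : ℕ) :
    ∀ (hi : i ≤ n), ∀ f ∈ K ⟨i, Nat.lt_succ_of_le hi⟩, ∀ d : Fin n → ℕ,
    SumPred (fun x => ∃ (c : F) (e : Fin n → ℕ),
        (∀ k : Fin n, i ≤ (k : ℕ) → e k = d k) ∧
        (c ∈ K 0 ∨ ∃ p : Fin n, IsProperAt (K p.castSucc) (t p) c ∧ ∀ k, e k ≠ 0 → p < k) ∧
        x = c * ∏ j, t j ^ e j) (f * ∏ j, t j ^ d j) := by
  induction i with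
  | zero =>
    intro hi f hf d
    refine sumPred_of ⟨f, d, fun _ _ => rfl, Or.inl ?_, rfl⟩
    have h0 : (0 : Fin (n+1)) = ⟨0, Nat.lt_succ_of_le hi⟩ := by ext; simp
    rw [h0]; exact hf
  | succ i ih =>
    intro hi f hf d
    classical
    have hiln : i < n := by omega
    set ii : Fin n := ⟨i, hiln⟩ with hii
    have hcs : ii.castSucc = (⟨i, by omega⟩ : Fin (n+1)) := rfl
    have hfs : f ∈ K ii.succ := hf
    have hne' : ∀ j : Fin n, (j : ℕ) ≠ i → j ≠ ii := fun j hj hc => hj (by rw [hc])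
    obtain ⟨P, Q, hQ, hfPQ⟩ := mem_succ_repr hadj ii hfs
    set A := Polynomial.X ^ (d ii) * P / Q with hA
    set R := Polynomial.X ^ (d ii) * P % Q with hR
    have hdm : Q * A + R = Polynomial.X ^ (d ii) * P := EuclideanDomain.div_add_mod _ _
    have hdeg : R.degree < Q.degree := EuclideanDomain.mod_lt _ hQ
    have haQ : Polynomial.aeval (t ii) Q ≠ 0 := aeval_ne_zero_of_tr _ _ (htr ii) hQ
    have key : f * t ii ^ (d ii) = Polynomial.aeval (t ii) A
        + Polynomial.aeval (t ii) R / Polynomial.aeval (t ii) Q := by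
      have h1 : Polynomial.aeval (t ii) Q * Polynomial.aeval (t ii) A
          + Polynomial.aeval (t ii) R = t ii ^ (d ii) * Polynomial.aeval (t ii) P := by
        have h2 := congrArg (Polynomial.aeval (t ii)) hdm
        simpa [map_add, map_mul, map_pow] using h2
      rw [hfPQ, div_mul_eq_mul_div, mul_comm (Polynomial.aeval (t ii) P) (t ii ^ d ii), ← h1,
        add_div, mul_div_cancel_left₀ _ haQ]
    have split : ∀ dd : Fin n → ℕ, (∏ j, t j ^ dd j)
        = (∏ j, t j ^ (if (j : ℕ) < i then dd j else 0)) * t ii ^ (dd ii)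
          * (∏ j, t j ^ (if i < (j : ℕ) then dd j else 0)) := by
      intro dd
      have hmid : t ii ^ (dd ii) = ∏ j, t j ^ (if j = ii then dd ii else 0) := by
        rw [Finset.prod_eq_single ii (fun b _ hb => by simp [hb]) (by simp)]
        simp
      rw [hmid, ← Finset.prod_mul_distrib, ← Finset.prod_mul_distrib]
      refine Finset.prod_congr rfl fun j _ => ?_
      rw [← pow_add, ← pow_add]
      congr 1
      by_cases hc : j = ii
      · subst hc
        have hival : (ii : ℕ) = i := rfl
        simp [hival]
      · have hne : (j : ℕ) ≠ i := fun h => hc (Fin.ext h)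
        rw [if_neg hc]
        rcases Nat.lt_or_ge (j : ℕ) i with h | h
        · rw [if_pos h, if_neg (by omega : ¬ i < (j : ℕ))]
          omega
        · have h' : i < (j : ℕ) := by omega
          rw [if_neg (by omega : ¬ (j : ℕ) < i), if_pos h']
          omega
    set lo : F := ∏ j, t j ^ (if (j : ℕ) < i then d j else 0) with hlo
    set hi' : F := ∏ j, t j ^ (if i < (j : ℕ) then d j else 0) with hhi
    have hloK : lo ∈ K ii.castSucc := by
      rw [hlo]
      refine Subfield.prod_mem _ fun j _ => ?_
      by_cases h : (j : ℕ) < i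
      · rw [if_pos h]
        exact Subfield.pow_mem _ (by rw [hcs]; exact t_mem_K hadj j h (by omega)) _
      · rw [if_neg h, pow_zero]
        exact Subfield.one_mem _
    set cp : F := lo * (Polynomial.aeval (t ii) R / Polynomial.aeval (t ii) Q) with hcp
    have hcpProper : IsProperAt (K ii.castSucc) (t ii) cp :=
      isProperAt_mul_mem _ _ hloK ⟨R, Q, hQ, hdeg, rfl⟩
    have hupdate : ∀ k : ℕ, (∏ j, t j ^ (Function.update d ii k) j)
        = lo * t ii ^ k * hi' := by
      intro k
      rw [split (Function.update d ii k), Function.update_self]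
      congr 1
      · congr 1
        rw [hlo]
        refine Finset.prod_congr rfl fun j _ => ?_
        by_cases h : (j : ℕ) < i
        · rw [if_pos h, if_pos h, Function.update_of_ne (hne' j (by omega))]
        · rw [if_neg h, if_neg h]
      · rw [hhi]
        refine Finset.prod_congr rfl fun j _ => ?_
        by_cases h : i < (j : ℕ)
        · rw [if_pos h, if_pos h, Function.update_of_ne (hne' j (by omega))]
        · rw [if_neg h, if_neg h]
    have main : f * ∏ j, t j ^ d j
        = (∑ k ∈ Finset.range (A.natDegree + 1),
            ((A.coeff k : F) * ∏ j, t j ^ (Function.update d ii k) j))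
          + cp * hi' := by
      have e1 : f * ∏ j, t j ^ d j
          = (f * t ii ^ (d ii)) * lo * hi' := by rw [split d]; ring
      rw [e1, key, add_mul, add_mul]
      congr 1
      · have e2 : Polynomial.aeval (t ii) A
            = ∑ k ∈ Finset.range (A.natDegree + 1), (A.coeff k : F) * t ii ^ k := by
          rw [Polynomial.aeval_eq_sum_range]
          refine Finset.sum_congr rfl fun k _ => ?_
          rw [Algebra.smul_def]
          rfl
        rw [e2, Finset.sum_mul, Finset.sum_mul]
        refine Finset.sum_congr rfl fun k _ => ?_
        rw [hupdate k]
        ring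
      · rw [hcp]; ring
    rw [main]
    refine sumPred_add (sumPred_finsetSum fun k _ => ?_) (sumPred_of ?_)
    · have hco : (A.coeff k : F) ∈ K ⟨i, Nat.lt_succ_of_le (by omega)⟩ := (A.coeff k).2
      have h := ih (by omega) _ hco (Function.update d ii k)
      refine sumPred_mono ?_ h
      rintro x ⟨c, e, hek, hcOK, rfl⟩
      refine ⟨c, e, ?_, hcOK, rfl⟩
      intro k' hk'
      rw [hek k' (by omega), Function.update_of_ne (hne' k' (by omega))]
    · refine ⟨cp, fun j => if i < (j : ℕ) then d j else 0, ?_, Or.inr ⟨ii, hcpProper, ?_⟩, rfl⟩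
      · intro k hk
        simp only
        rw [if_pos (show i < (k : ℕ) by omega)]
      · intro k hk
        simp only at hk
        by_cases h : i < (k : ℕ)
        · exact h
        · rw [if_neg h] at hk
          exact absurd rfl hk

end Decomp

/-- Let `Kₙ = K₀(t₁,…,tₙ)` be a primitive tower, `M = t₁^{E₁}⋯tₙ^{Eₙ}` a
monomial with indicator `m` (0-based), and `a ∈ K_{m-1}`.  If `a` is the
derivative of an element of `K_{m-1}`, then `a·M ∈ Kₙ′ + Kₙ^{(≺M)}`, i.e.
`a·M` is congruent modulo derivatives in `Kₙ` to an element whose head monomial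
is strictly lower than `M`. -/
theorem derivative_coefficient_reduces (F : Type*) [Field F] [CharZero F]
    (δ : F → F)
    (hδadd : ∀ a b : F, δ (a + b) = δ a + δ b)
    (hδmul : ∀ a b : F, δ (a * b) = δ a * b + a * δ b)
    (n : ℕ) (t : Fin n → F) (K : Fin (n + 1) → Subfield F)
    (hclosed : ∀ i, ∀ a ∈ K i, δ a ∈ K i)
    (hadj : ∀ i : Fin n,
      K i.succ = Subfield.closure ((K i.castSucc : Set F) ∪ {t i}))
    (htr : ∀ i : Fin n, Transcendental ↥(K i.castSucc) (t i))
    (hder : ∀ i : Fin n, δ (t i) ∈ K i.castSucc)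
    (hconst : ∀ i : Fin n, ∀ y ∈ K i.succ, δ y = 0 → y ∈ K i.castSucc)
    (htop : K (Fin.last n) = ⊤)
    (E : Fin n → ℕ) (m : Fin n)
    (hind : (E m ≠ 0 ∧ ∀ j, j < m → E j = 0) ∨
      ((∀ j, E j = 0) ∧ (m : ℕ) + 1 = n))
    (a : F) (haK : a ∈ K m.castSucc)
    (ha : ∃ b ∈ K m.castSucc, δ b = a) :
    ∃ g r : F, BelowMon t K E r ∧ a * ∏ j, t j ^ E j = δ g + r := by
  classical
  obtain ⟨b, hbK, hba⟩ := ha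
  have hdM : δ (∏ j, t j ^ E j)
      = ∑ j, (E j : F) * t j ^ (E j - 1) * δ (t j) * ∏ k ∈ Finset.univ.erase j, t k ^ E k := by
    rw [delta_prod δ hδmul]
    exact Finset.sum_congr rfl fun j _ => by rw [delta_pow δ hδmul]
  refine ⟨b * ∏ j, t j ^ E j, -(b * δ (∏ j, t j ^ E j)), ?_, by rw [hδmul, hba]; ring⟩
  have hmle : ∀ j : Fin n, E j ≠ 0 → (m : ℕ) ≤ (j : ℕ) := by
    intro j hj
    rcases hind with ⟨_, h2⟩ | ⟨h1, _⟩
    · by_contra h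
      exact hj (h2 j (Fin.lt_def.2 (by omega)))
    · exact absurd (h1 j) hj
  have hterm : ∀ j : Fin n,
      b * ((E j : F) * t j ^ (E j - 1) * δ (t j) * ∏ k ∈ Finset.univ.erase j, t k ^ E k)
      = ((E j : F) * b * δ (t j)) * ∏ k, t k ^ (Function.update E j (E j - 1)) k := by
    intro j
    have hp : (∏ k, t k ^ (Function.update E j (E j - 1)) k)
        = t j ^ (E j - 1) * ∏ k ∈ Finset.univ.erase j, t k ^ E k := by
      rw [← Finset.mul_prod_erase Finset.univ _ (Finset.mem_univ j), Function.update_self]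
      congr 1
      exact Finset.prod_congr rfl fun k hk => by
        rw [Function.update_of_ne (Finset.ne_of_mem_erase hk)]
    rw [hp]; ring
  have hrsum : -(b * δ (∏ j, t j ^ E j))
      = ∑ j, -(((E j : F) * b * δ (t j)) * ∏ k, t k ^ (Function.update E j (E j - 1)) k) := by
    rw [hdM, Finset.mul_sum, ← Finset.sum_neg_distrib]
    exact Finset.sum_congr rfl fun j _ => by rw [← hterm j]
  rw [hrsum]
  refine belowMon_finsetSum htr fun j _ => ?_
  by_cases hEj : E j = 0
  · have hz : -(((E j : F) * b * δ (t j)) * ∏ k, t k ^ (Function.update E j (E j - 1)) k) = 0 := by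
      simp [hEj]
    rw [hz]
    exact belowMon_zero
  · have hjn : (j : ℕ) ≤ n := le_of_lt j.isLt
    have hcmem : -((E j : F) * b * δ (t j)) ∈ K ⟨(j : ℕ), Nat.lt_succ_of_le hjn⟩ := by
      refine Subfield.neg_mem _ (Subfield.mul_mem _ (Subfield.mul_mem _ ?_ ?_) ?_)
      · exact natCast_mem _ _
      · exact K_mono hadj (hmle j hEj) hjn hbK
      · exact hder j
    have hdec := decomp hadj htr (j : ℕ) hjn _ hcmem (Function.update E j (E j - 1))
    have heq : -(((E j : F) * b * δ (t j)) * ∏ k, t k ^ (Function.update E j (E j - 1)) k)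
        = (-((E j : F) * b * δ (t j))) * ∏ k, t k ^ (Function.update E j (E j - 1)) k := by ring
    rw [heq]
    obtain ⟨l, hl, hsum⟩ := hdec
    rw [hsum]
    refine belowMon_listSum htr fun x hx => ?_
    obtain ⟨c, e, hek, hcOK, rfl⟩ := hl x hx
    have hmlt : MonLt e E := by
      refine ⟨j, ?_, ?_⟩
      · rw [hek j (le_refl _), Function.update_self]
        omega
      · intro k hk
        rw [hek k (le_of_lt hk), Function.update_of_ne (by intro hc; subst hc; exact absurd hk (lt_irrefl _))]
    rcases hcOK with hc0 | ⟨p, hp, hsupp⟩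
    · exact belowMon_term_K0 hmlt hc0
    · exact belowMon_term_proper hmlt hp hsupp
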